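/- Let G be a countable, locally finite graph, let β ∈ [0,∞], and let Q be an augmented β-arboreal gas Gibbs measure on G. If X ∈ 𝒯 is a tail event with Q(X) > 0, then the conditioned measure Q(·|X) is also an augmented β-arboreal gas Gibbs measure on G. -/

import Mathlib

open MeasureTheory
open scoped ENNReal symmDiff

noncomputable section

namespace ArborealGas

variable {V : Type*} (G : SimpleGraph V)

/-- The (inner vertex) boundary of a subgraph `H` relative to the host subgraph `Γ` of `G`:
the vertices of `H` incident to an edge of `Γ` not belonging to `H`. -/
def bdry (Γ H : G.Subgraph) : Set V :=
  {v | v ∈ H.verts ∧ ∃ u, Γ.Adj v u ∧ ¬ H.Adj v u}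

/-- Restriction of a relation to pairs inside a set. -/
def restrictRel (B : Set V) (φ : V → V → Prop) : V → V → Prop :=
  fun a b => a ∈ B ∧ b ∈ B ∧ φ a b

/-- `u` and `v` are connected in the quotient graph `F/φ` (the graph obtained from
`F` by identifying vertices of `F` lying in a common class of `φ`). -/
def quotConn (F : G.Subgraph) (φ : V → V → Prop) : V → V → Prop :=
  Relation.ReflTransGen fun a b =>
    F.Adj a b ∨ (a ∈ F.verts ∧ b ∈ F.verts ∧ φ a b)

/-- `F` extends the boundary condition `φ` (an equivalence relation on the boundary of `H`
in the host `Γ`): the quotient `F/φ` is acyclic, i.e. every edge of `F` is a bridge of `F/φ`. -/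
def Extends (Γ H : G.Subgraph) (φ : V → V → Prop) (F : G.Subgraph) : Prop :=
  ∀ a b, F.Adj a b →
    ¬ quotConn G (F.deleteEdges {s(a, b)}) (restrictRel (bdry G Γ H) φ) a b

/-- `F` is a spanning forest of `H` extending the boundary condition `φ`:
an element of `𝓕(H,φ)` containing every vertex of `H`. -/
def IsSpanningForestExtending (Γ H : G.Subgraph) (φ : V → V → Prop) (F : G.Subgraph) : Prop :=
  F ≤ H ∧ F.verts = H.verts ∧ Extends G Γ H φ F

/-- `F` is an `(H,φ)`-maximal spanning forest: no edge of `H` can be added to `F`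
while remaining a spanning forest extending `φ`. -/
def IsMaximalSpanningForestExtending (Γ H : G.Subgraph) (φ : V → V → Prop)
    (F : G.Subgraph) : Prop :=
  IsSpanningForestExtending G Γ H φ F ∧
    ∀ a b, (hab : H.Adj a b) → ¬ F.Adj a b →
      ¬ IsSpanningForestExtending G Γ H φ (F ⊔ G.subgraphOfAdj (H.adj_sub hab))

open Classical in
/-- The unnormalized arboreal gas weight `β ^ |F|` of a spanning forest `F` of `H`
extending `φ` (with the convention `0 ^ 0 = 1`); for `β = ∞` the uniform weight on
`(H,φ)`-maximal spanning forests. -/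
def gibbsWeight (β : ℝ≥0∞) (Γ H : G.Subgraph) (φ : V → V → Prop) (F : G.Subgraph) : ℝ≥0∞ :=
  if β = ⊤ then (if IsMaximalSpanningForestExtending G Γ H φ F then 1 else 0)
  else if IsSpanningForestExtending G Γ H φ F then β ^ F.edgeSet.ncard else 0

/-- The σ-algebra on the space of subgraphs of `G`: the product (cylinder) σ-algebra,
generated by the vertex- and edge-membership maps. -/
instance subgraphMeasurableSpace : MeasurableSpace G.Subgraph :=
  MeasurableSpace.comap
    (fun S => ((fun v => v ∈ S.verts), S.Adj) :
      G.Subgraph → (V → Prop) × (V → V → Prop)) inferInstance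

/-- The finite-volume `β`-arboreal gas Gibbs measure `P^φ_{H,β}` on the finite subgraph `H`
of the host graph `Γ` with boundary condition `φ`, regarded as a measure on subgraphs of `G`:
each spanning forest `F` of `H` extending `φ` gets probability proportional to `β ^ |F|`
(uniform on `(H,φ)`-maximal spanning forests when `β = ∞`). -/
def finGibbs (β : ℝ≥0∞) (Γ H : G.Subgraph) (φ : V → V → Prop) : Measure G.Subgraph :=
  (∑' F : G.Subgraph, gibbsWeight G β Γ H φ F)⁻¹ •
    Measure.sum fun F : G.Subgraph => gibbsWeight G β Γ H φ F • Measure.dirac F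

/-- The raw space in which augmented subgraphs of `G` live: pairs `(S, Φ)` of a subgraph `S`
of `G` and a boundary map `Φ` assigning to each (finite) subgraph `H` a relation on `V`.
It carries the product Borel σ-algebra. -/
abbrev AugSub := G.Subgraph × (G.Subgraph → V → V → Prop)

/-- `φ` is an equivalence relation on the set `B` (relating only elements of `B`). -/
def IsEquivRelOn (B : Set V) (φ : V → V → Prop) : Prop :=
  (∀ u v, φ u v → u ∈ B ∧ v ∈ B) ∧ (∀ u ∈ B, φ u u) ∧
    (∀ u v, φ u v → φ v u) ∧ (∀ u v w, φ u v → φ v w → φ u w)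

/-- `(S, Φ)` is an augmented subgraph of the host graph `Γ ≤ G`: `S ≤ Γ`, for each finite
subgraph `H` of `Γ` the relation `Φ(H)` is an equivalence relation on the boundary `∂H`,
and the consistency condition holds: for finite subgraphs `H ⊆ K` of `Γ` and `u, v ∈ ∂H`,
`u` and `v` are `Φ(H)`-related iff they are connected in `((S ⊓ K) ∖ E[H])/Φ(K)`. -/
def IsAugmentedIn (Γ : G.Subgraph) (A : AugSub G) : Prop :=
  A.1 ≤ Γ ∧
  (∀ H : G.Subgraph, H ≤ Γ → H.verts.Finite → IsEquivRelOn (bdry G Γ H) (A.2 H)) ∧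
  (∀ H K : G.Subgraph, H ≤ K → K ≤ Γ → K.verts.Finite →
    ∀ u v, u ∈ bdry G Γ H → v ∈ bdry G Γ H →
      (A.2 H u v ↔
        quotConn G ((A.1 ⊓ K).deleteEdges H.edgeSet)
          (restrictRel (bdry G Γ K) (A.2 K)) u v))

/-- The data of an augmented subgraph `(S, Φ)` determined outside the finite subgraph `H`:
the subgraph `S ∖ E[H]` together with the family `Φ_H = (Φ(K) : K ⊇ H finite)`. -/
def outsideMap (Γ H : G.Subgraph) (A : AugSub G) :
    G.Subgraph × (G.Subgraph → V → V → Prop) :=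
  (A.1.deleteEdges H.edgeSet,
    fun K u v => (H ≤ K ∧ K ≤ Γ ∧ K.verts.Finite) ∧ A.2 K u v)

/-- The σ-algebra `𝒢_H` on augmented subgraphs generated by `(S, Φ) ↦ (S ∖ E[H], Φ_H)`. -/
def outSigma (Γ H : G.Subgraph) : MeasurableSpace (AugSub G) :=
  MeasurableSpace.comap (outsideMap G Γ H) inferInstance

/-- A tail event: an event belonging to `𝒢_H` for every finite subgraph `H`. -/
def IsTailEvent (Γ : G.Subgraph) (X : Set (AugSub G)) : Prop :=
  ∀ H : G.Subgraph, H ≤ Γ → H.verts.Finite → MeasurableSet[outSigma G Γ H] X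

/-- `Q` is an augmented `β`-arboreal gas Gibbs measure on the host graph `Γ ≤ G`:
a probability measure on augmented subgraphs of `Γ` such that for every finite subgraph `H`
of `Γ` and every subgraph `F₀` of `H`, the conditional probability of `{A ∩ H = F₀}` given
`𝒢_H` is almost surely `P^{Φ(H)}_{H,β}(F₀)`. -/
def IsAugGibbs (β : ℝ≥0∞) (Γ : G.Subgraph) (Q : Measure (AugSub G)) : Prop :=
  IsProbabilityMeasure Q ∧
  Q {A : AugSub G | IsAugmentedIn G Γ A} = 1 ∧
  ∀ H : G.Subgraph, H ≤ Γ → H.verts.Finite →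
    ∀ F₀ : G.Subgraph, F₀ ≤ H →
      (Q[({A : AugSub G | A.1 ⊓ H = F₀}).indicator (fun _ => (1 : ℝ)) | outSigma G Γ H])
        =ᵐ[Q] fun A => (finGibbs G β Γ H (A.2 H) {F₀}).toReal

/-- `P` is a `β`-arboreal gas Gibbs measure on the host graph `Γ ≤ G`: the pushforward of
some augmented `β`-arboreal gas Gibbs measure (a Gibbs augmentation of `P`) under
`(S, Φ) ↦ S`. -/
def IsGibbs (β : ℝ≥0∞) (Γ : G.Subgraph) (P : Measure G.Subgraph) : Prop :=
  ∃ Q : Measure (AugSub G), IsAugGibbs G β Γ Q ∧ Q.map Prod.fst = P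

/-- The finite subgraph with vertex set `{u, v}` and no edges. -/
def pairSub (u v : V) : G.Subgraph where
  verts := {u, v}
  Adj _ _ := False
  adj_sub h := h.elim
  edge_vert h := h.elim
  symm := ⟨fun _ _ h => h.elim⟩

/-- The augmented connectivity relation of an augmented subgraph `(S, Φ)`:
`u ↔ v` iff `Φ({u,v})(u,v) = 1`. -/
def augConn (A : AugSub G) (u v : V) : Prop :=
  A.2 (pairSub G u v) u v

/-- The subgraph of `G` induced by a set `I` of vertices. -/
def traceSub (I : Set V) : G.Subgraph where
  verts := I
  Adj u v := G.Adj u v ∧ u ∈ I ∧ v ∈ I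
  adj_sub h := h.1
  edge_vert h := h.2.1
  symm := ⟨fun _ _ h => ⟨h.1.symm, h.2.2, h.2.1⟩⟩

/-- A subgraph is connected: nonempty vertex set, any two vertices joined by a path. -/
def SubConnected (S : G.Subgraph) : Prop :=
  S.verts.Nonempty ∧ ∀ u ∈ S.verts, ∀ v ∈ S.verts, Relation.ReflTransGen S.Adj u v

/-- The hypercubic lattice `ℤ^d`: vertices `Fin d → ℤ`, edges between points at
`ℓ¹`-distance one. -/
def ZdGraph (d : ℕ) : SimpleGraph (Fin d → ℤ) where
  Adj x y := ∑ i, (x i - y i).natAbs = 1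
  symm := ⟨by
    intro x y h
    rw [← h]
    exact Finset.sum_congr rfl fun i _ => by omega⟩
  loopless := ⟨by intro x h; simp at h⟩

/-- Translation of subgraphs of `ℤ^d` by a lattice vector `t`. -/
def translateSub {d : ℕ} (t : Fin d → ℤ) (S : (ZdGraph d).Subgraph) : (ZdGraph d).Subgraph where
  verts := {v | v - t ∈ S.verts}
  Adj u v := S.Adj (u - t) (v - t)
  adj_sub := by
    intro u v h
    have h2 := S.adj_sub h
    simpa [ZdGraph, sub_sub_sub_cancel_right] using h2
  edge_vert := by intro u v h; exact S.edge_vert h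
  symm := ⟨fun _ _ h => h.symm⟩

/-- Translation of augmented subgraphs of `ℤ^d` by a lattice vector `t`:
`(τ_t Φ)(H)(u,v) = Φ(H - t)(u - t, v - t)`. -/
def translateAug {d : ℕ} (t : Fin d → ℤ) (A : AugSub (ZdGraph d)) : AugSub (ZdGraph d) :=
  (translateSub t A.1, fun K u v => A.2 (translateSub (-t) K) (u - t) (v - t))

/-- A translation-invariant augmented `β`-arboreal gas Gibbs measure on `ℤ^d`. -/
def IsTransInvAugGibbs (d : ℕ) (β : ℝ≥0∞) (Q : Measure (AugSub (ZdGraph d))) : Prop :=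
  IsAugGibbs (ZdGraph d) β ⊤ Q ∧ ∀ t, Q.map (translateAug t) = Q

/-- An extremal point of the convex set of translation-invariant augmented `β`-arboreal gas
Gibbs measures on `ℤ^d`. -/
def IsExtremalTransInvAugGibbs (d : ℕ) (β : ℝ≥0∞)
    (Q : Measure (AugSub (ZdGraph d))) : Prop :=
  IsTransInvAugGibbs d β Q ∧
    ∀ (Q₁ Q₂ : Measure (AugSub (ZdGraph d))) (t : ℝ≥0∞), 0 < t → t < 1 →
      IsTransInvAugGibbs d β Q₁ → IsTransInvAugGibbs d β Q₂ →
      Q = t • Q₁ + (1 - t) • Q₂ → Q₁ = Q₂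


section Aux

variable {W : Type*} {G' : SimpleGraph W}

/-- The defining projection of the subgraph σ-algebra is measurable. -/
lemma measurable_subgraphProj :
    Measurable (fun S : G'.Subgraph =>
      (((fun v => v ∈ S.verts), S.Adj) : (W → Prop) × (W → W → Prop))) :=
  Measurable.of_comap_le le_rfl

lemma measurable_mem_verts (v : W) : Measurable fun S : G'.Subgraph => v ∈ S.verts :=
  (measurable_pi_apply v).comp measurable_subgraphProj.fst

lemma measurable_adj (u v : W) : Measurable fun S : G'.Subgraph => S.Adj u v :=
  (measurable_pi_apply v).comp ((measurable_pi_apply u).comp measurable_subgraphProj.snd)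

/-- A map into subgraphs is measurable if vertex- and edge-membership are. -/
lemma measurable_toSubgraph {α : Type*} [MeasurableSpace α] {f : α → G'.Subgraph}
    (h : Measurable fun a =>
      (((fun v => v ∈ (f a).verts), (f a).Adj) : (W → Prop) × (W → W → Prop))) :
    Measurable f :=
  Measurable.of_comap_le (le_of_eq_of_le MeasurableSpace.comap_comp h.comap_le)

/-- The projection onto the data outside `H` is measurable. -/
lemma measurable_outsideMap (Γ H : G'.Subgraph) : Measurable (outsideMap G' Γ H) := by
  refine Measurable.prod ?_ ?_
  · refine measurable_toSubgraph ?_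
    refine Measurable.prod ?_ ?_
    · refine measurable_pi_lambda _ fun v => ?_
      simp only [outsideMap, SimpleGraph.Subgraph.deleteEdges_verts]
      exact (measurable_mem_verts v).comp measurable_fst
    · refine measurable_pi_lambda _ fun u => ?_
      refine measurable_pi_lambda _ fun v => ?_
      have : (fun A : AugSub G' => ((outsideMap G' Γ H A).1).Adj u v)
          = fun A : AugSub G' => (A.1.Adj u v ∧ ¬ s(u, v) ∈ H.edgeSet) := by
        funext A
        exact propext (SimpleGraph.Subgraph.deleteEdges_adj _ _ _)
      rw [this]
      exact ((measurable_adj u v).comp measurable_fst).and measurable_const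
  · refine measurable_pi_lambda _ fun K => ?_
    refine measurable_pi_lambda _ fun u => ?_
    refine measurable_pi_lambda _ fun v => ?_
    exact measurable_const.and
      ((measurable_pi_apply v).comp ((measurable_pi_apply u).comp
        ((measurable_pi_apply K).comp measurable_snd)))

/-- The event that the restriction of the random subgraph to `H` equals `F₀` is measurable. -/
lemma measurableSet_inf_eq [Countable W] (H F₀ : G'.Subgraph) :
    MeasurableSet {A : AugSub G' | A.1 ⊓ H = F₀} := by
  have hset : {A : AugSub G' | A.1 ⊓ H = F₀} =
      (⋂ v, {A : AugSub G' | (v ∈ A.1.verts ∧ v ∈ H.verts) ↔ v ∈ F₀.verts}) ∩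
        ⋂ u, ⋂ v, {A : AugSub G' | (A.1.Adj u v ∧ H.Adj u v) ↔ F₀.Adj u v} := by
    ext A
    simp only [Set.mem_setOf_eq, Set.mem_inter_iff, Set.mem_iInter]
    constructor
    · intro h
      subst h
      refine ⟨fun v => ?_, fun u v => ?_⟩
      · rw [SimpleGraph.Subgraph.verts_inf]; exact Iff.rfl
      · exact (SimpleGraph.Subgraph.inf_adj).symm
    · rintro ⟨h1, h2⟩
      refine SimpleGraph.Subgraph.ext ?_ ?_
      · ext v
        rw [SimpleGraph.Subgraph.verts_inf] at *
        exact h1 v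
      · funext u v
        refine propext ?_
        rw [SimpleGraph.Subgraph.inf_adj]
        exact h2 u v
  rw [hset]
  refine MeasurableSet.inter ?_ ?_
  · refine MeasurableSet.iInter fun v => ?_
    exact (((measurable_mem_verts v).comp measurable_fst).and measurable_const).iff
      measurable_const |>.setOf
  · refine MeasurableSet.iInter fun u => ?_
    refine MeasurableSet.iInter fun v => ?_
    exact (((measurable_adj u v).comp measurable_fst).and measurable_const).iff
      measurable_const |>.setOf

end Aux

/-- Lemma: conditioning on a tail event. Let `G` be a countable, locally
finite graph and `β ∈ [0,∞]`, and let `Q` be an augmented `β`-arboreal gas Gibbs measure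
on `G`. If `X ∈ 𝒯` is a tail event with `Q(X) > 0`, then `Q(·|X)` is also an augmented
`β`-arboreal gas Gibbs measure on `G`. -/
theorem condition_on_tail_event
    {V : Type*} [Countable V] (G : SimpleGraph V)
    (hlf : ∀ v : V, (G.neighborSet v).Finite)
    (β : ℝ≥0∞) (Q : Measure (AugSub G)) (hQ : IsAugGibbs G β ⊤ Q)
    (X : Set (AugSub G)) (hX : IsTailEvent G ⊤ X) (hpos : 0 < Q X) :
    IsAugGibbs G β ⊤ (ProbabilityTheory.cond Q X) := by
  classical
  obtain ⟨hQprob, hQfull, hQcond⟩ := hQ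
  have hXne : Q X ≠ 0 := hpos.ne'
  have hXtop : Q X ≠ ⊤ := measure_ne_top Q X
  -- the σ-algebras 𝒢_H are sub-σ-algebras of the ambient one
  have hcomap : ∀ H : G.Subgraph,
      outSigma G ⊤ H ≤ (inferInstance : MeasurableSpace (AugSub G)) :=
    fun H => (measurable_outsideMap (⊤ : G.Subgraph) H).comap_le
  have hbotfin : (⊥ : G.Subgraph).verts.Finite := by
    rw [SimpleGraph.Subgraph.verts_bot]; exact Set.finite_empty
  have hXm0 : MeasurableSet X := hcomap ⊥ _ (hX ⊥ bot_le hbotfin)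
  haveI hQ'prob : IsProbabilityMeasure (ProbabilityTheory.cond Q X) :=
    ProbabilityTheory.cond_isProbabilityMeasure_of_finite hXne hXtop
  refine ⟨hQ'prob, ?_, ?_⟩
  · -- the conditioned measure is still supported on augmented subgraphs
    set S : Set (AugSub G) := {A : AugSub G | IsAugmentedIn G ⊤ A} with hS
    have happ : ProbabilityTheory.cond Q X S = (Q X)⁻¹ * Q (X ∩ S) :=
      ProbabilityTheory.cond_apply hXm0 Q S
    have hle : Q (X ∩ S) ≤ Q X := measure_mono Set.inter_subset_left
    have hge : Q X ≤ Q (X ∩ S) := by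
      have hsub : S ⊆ toMeasurable Q (X ∩ S) ∪ Xᶜ := by
        intro A hA
        by_cases hAX : A ∈ X
        · exact Or.inl (subset_toMeasurable _ _ ⟨hAX, hA⟩)
        · exact Or.inr hAX
      have h1 : (1 : ℝ≥0∞) ≤ Q (X ∩ S) + Q Xᶜ := by
        calc (1 : ℝ≥0∞) = Q S := hQfull.symm
          _ ≤ Q (toMeasurable Q (X ∩ S) ∪ Xᶜ) := measure_mono hsub
          _ ≤ Q (toMeasurable Q (X ∩ S)) + Q Xᶜ := measure_union_le _ _
          _ = Q (X ∩ S) + Q Xᶜ := by rw [measure_toMeasurable]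
      have hXc : Q Xᶜ = 1 - Q X := prob_compl_eq_one_sub hXm0
      have h2 : (1 : ℝ≥0∞) - (1 - Q X) ≤ Q (X ∩ S) := by
        rw [tsub_le_iff_right]
        rw [hXc] at h1
        exact h1
      calc Q X = 1 - (1 - Q X) :=
            (ENNReal.sub_sub_cancel ENNReal.one_ne_top prob_le_one).symm
        _ ≤ Q (X ∩ S) := h2
    rw [happ, le_antisymm hle hge, ENNReal.inv_mul_cancel hXne hXtop]
  · -- the DLR equations for the conditioned measure
    intro H hH hHfin F₀ hF₀
    set Q' : Measure (AugSub G) := ProbabilityTheory.cond Q X with hQ'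
    set g : AugSub G → ℝ :=
      ({A : AugSub G | A.1 ⊓ H = F₀}).indicator (fun _ => (1 : ℝ)) with hg
    set h : AugSub G → ℝ := fun A => (finGibbs G β ⊤ H (A.2 H) {F₀}).toReal with hhdef
    have hmle : outSigma G ⊤ H ≤ (inferInstance : MeasurableSpace (AugSub G)) := hcomap H
    have hXmm : MeasurableSet[outSigma G ⊤ H] X := hX H hH hHfin
    have hgms : MeasurableSet {A : AugSub G | A.1 ⊓ H = F₀} := measurableSet_inf_eq H F₀
    have hgintQ : Integrable g Q := (integrable_const (1 : ℝ)).indicator hgms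
    have hcond : Q[g|outSigma G ⊤ H] =ᵐ[Q] h := hQcond H hH hHfin F₀ hF₀
    have hac : Q' ≪ Q := ProbabilityTheory.cond_absolutelyContinuous
    have hae' : h =ᵐ[Q'] Q[g|outSigma G ⊤ H] := (hcond.filter_mono hac.ae_le).symm
    haveI : SigmaFinite (Q'.trim hmle) := inferInstance
    haveI : SigmaFinite (Q.trim hmle) := inferInstance
    have hintQ' : Integrable g Q' := (integrable_const (1 : ℝ)).indicator hgms
    have hhintQ' : Integrable h Q' := by
      have h1 : Integrable (Q[g|outSigma G ⊤ H]) Q := integrable_condExp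
      have h2 : Integrable (Q[g|outSigma G ⊤ H]) Q' := by
        rw [hQ', ProbabilityTheory.cond]
        exact (h1.integrableOn).smul_measure (ENNReal.inv_ne_top.mpr hXne)
      exact h2.congr hae'.symm
    have hkey : h =ᵐ[Q'] Q'[g|outSigma G ⊤ H] := by
      refine ae_eq_condExp_of_forall_setIntegral_eq hmle hintQ'
        (fun s hs _ => hhintQ'.integrableOn) ?_
        ⟨Q[g|outSigma G ⊤ H], stronglyMeasurable_condExp, hae'⟩
      intro s hs hsfin
      have hsm0 : MeasurableSet s := hmle s hs
      have hrw : Q'.restrict s = (Q X)⁻¹ • Q.restrict (s ∩ X) := by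
        rw [hQ', ProbabilityTheory.cond, Measure.restrict_smul,
          Measure.restrict_restrict hsm0]
      have hint : ∀ f : AugSub G → ℝ,
          ∫ x in s, f x ∂Q' = (Q X)⁻¹.toReal • ∫ x in (s ∩ X), f x ∂Q := by
        intro f
        rw [hrw]
        exact integral_smul_measure _ _
      rw [hint h, hint g]
      congr 1
      have hcongr : ∫ x in (s ∩ X), h x ∂Q = ∫ x in (s ∩ X), (Q[g|outSigma G ⊤ H]) x ∂Q :=
        integral_congr_ae (ae_restrict_of_ae hcond.symm)
      rw [hcongr, setIntegral_condExp hmle hgintQ (hs.inter hXmm)]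
    exact hkey.symm


end ArborealGas

end
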